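/- arXiv:2403.02834 — 2 statements merged into one kernel-verified Lean document; each statement's English description precedes it below -/
import Mathlib

section
/- Let Û₀, V̂₀ have orthonormal columns and suppose F satisfies ⟨Z, F(t,Z)⟩ = 0 for all Z. If S̄(t) solves the Galerkin equation S̄'(t) = Û₀ᵀ F(t, Û₀ S̄(t) V̂₀ᵀ) V̂₀, then ‖S̄(t)‖_F is constant in t. -/
open Matrix

noncomputable def fro {m n : ℕ} (A : Matrix (Fin m) (Fin n) ℝ) : ℝ :=
  Real.sqrt (Matrix.trace (Aᵀ * A))

theorem galerkin_norm_constant (m n p : ℕ)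
    (Uh₀ : Matrix (Fin m) (Fin p) ℝ) (Vh₀ : Matrix (Fin n) (Fin p) ℝ)
    (hUh₀ : Uh₀ᵀ * Uh₀ = 1) (hVh₀ : Vh₀ᵀ * Vh₀ = 1)
    (F : ℝ → Matrix (Fin m) (Fin n) ℝ → Matrix (Fin m) (Fin n) ℝ)
    (hF : ∀ t (Z : Matrix (Fin m) (Fin n) ℝ), Matrix.trace (Zᵀ * F t Z) = 0)
    (Sb : ℝ → Matrix (Fin p) (Fin p) ℝ)
    (hS : ∀ t i j, HasDerivAt (fun s => Sb s i j)
      ((Uh₀ᵀ * F t (Uh₀ * Sb t * Vh₀ᵀ) * Vh₀) i j) t) :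
    ∀ t s : ℝ, fro (Sb t) = fro (Sb s) := by
  set g : ℝ → ℝ := fun t => ∑ i, ∑ j, (Sb t i j)^2 with hg
  have hderiv : ∀ t, HasDerivAt g 0 t := by
    intro t
    set G := Uh₀ᵀ * F t (Uh₀ * Sb t * Vh₀ᵀ) * Vh₀ with hG
    have h1 : HasDerivAt g (∑ i, ∑ j, 2 * Sb t i j * G i j) t := by
      apply HasDerivAt.fun_sum
      intro i _
      apply HasDerivAt.fun_sum
      intro j _
      have h := ((hS t i j).mul (hS t i j))
      have e : (fun s => Sb s i j ^ 2) = fun s => Sb s i j * Sb s i j := by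
        funext s; ring
      rw [e]
      exact h.congr_deriv (by rw [hG]; ring)
    have h2 : (∑ i, ∑ j, 2 * Sb t i j * G i j) = 0 := by
      have key : Matrix.trace ((Sb t)ᵀ * G) = 0 := by
        have : (Sb t)ᵀ * G = ((Sb t)ᵀ * Uh₀ᵀ * F t (Uh₀ * Sb t * Vh₀ᵀ)) * Vh₀ := by
          rw [hG]; simp [Matrix.mul_assoc]
        rw [this, Matrix.trace_mul_comm]
        have : Vh₀ * ((Sb t)ᵀ * Uh₀ᵀ * F t (Uh₀ * Sb t * Vh₀ᵀ))
            = (Uh₀ * Sb t * Vh₀ᵀ)ᵀ * F t (Uh₀ * Sb t * Vh₀ᵀ) := by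
          simp [Matrix.transpose_mul, Matrix.mul_assoc]
        rw [this, hF]
      have expand : Matrix.trace ((Sb t)ᵀ * G) = ∑ j, ∑ i, Sb t i j * G i j := by
        simp [Matrix.trace, Matrix.mul_apply, Matrix.diag]
      rw [expand] at key
      rw [Finset.sum_comm] at key
      calc (∑ i, ∑ j, 2 * Sb t i j * G i j)
          = 2 * ∑ i, ∑ j, Sb t i j * G i j := by
            rw [Finset.mul_sum]; congr 1; ext i; rw [Finset.mul_sum]; congr 1; ext j; ring
        _ = 0 := by rw [key]; ring
    rw [← h2]; exact h1
  have hconst : ∀ t s, g t = g s := by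
    intro t s
    have := is_const_of_deriv_eq_zero (f := g)
      (fun x => (hderiv x).differentiableAt) (fun x => (hderiv x).deriv) t s
    exact this
  intro t s
  have htr : ∀ u, Matrix.trace ((Sb u)ᵀ * Sb u) = g u := by
    intro u
    simp only [hg, Matrix.trace, Matrix.mul_apply, Matrix.diag, Matrix.transpose_apply, sq]
    exact Finset.sum_comm

  unfold fro
  rw [htr t, htr s, hconst t s]
end

section
/- Let P^⊥ = I − Û₁ Û₁ᵀ where Û₁ has orthonormal columns spanning a subspace containing the columns of both Û₀ and K(t₁). If F is L-Lipschitz in its second argument and K(t₁) = K(t₀) + h F(t_{1/2}, Y_{1/2}) V̂₀ + E with ‖E‖ ≤ c h³, Û₀ᵀ columns contain those of K(t₀), and V̂₀ has orthonormal columns, then h‖P^⊥ F(t_{1/2}, Ŷ_*) V̂₀ V̂₀ᵀ‖ ≤ h L ‖Ŷ_* − Y_{1/2}‖ + c h³ for any matrix Ŷ_*. -/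
open Matrix

section FroAux
attribute [local instance] Matrix.frobeniusSeminormedAddCommGroup Matrix.frobeniusNormedSpace

lemma fro_eq_norm {m n : ℕ} (A : Matrix (Fin m) (Fin n) ℝ) : fro A = ‖A‖ := by
  rw [fro, Matrix.frobenius_norm_def, Real.sqrt_eq_rpow]
  congr 1
  · rw [Matrix.trace]
    simp only [Matrix.diag, Matrix.mul_apply, Matrix.transpose_apply, Real.norm_eq_abs, sq_abs]
    rw [Finset.sum_comm]
    simp [sq]

lemma fro_nonneg {m n : ℕ} (A : Matrix (Fin m) (Fin n) ℝ) : 0 ≤ fro A :=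
  Real.sqrt_nonneg _

lemma fro_add_le {m n : ℕ} (A B : Matrix (Fin m) (Fin n) ℝ) :
    fro (A + B) ≤ fro A + fro B := by
  simp only [fro_eq_norm]; exact norm_add_le _ _

lemma fro_smul {m n : ℕ} (r : ℝ) (A : Matrix (Fin m) (Fin n) ℝ) :
    fro (r • A) = |r| * fro A := by
  simp only [fro_eq_norm]; rw [norm_smul, Real.norm_eq_abs]

end FroAux

lemma trace_tmul_nonneg {m n : ℕ} (A : Matrix (Fin m) (Fin n) ℝ) :
    0 ≤ Matrix.trace (Aᵀ * A) := by
  apply Finset.sum_nonneg; intro j _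
  simp only [Matrix.diag, Matrix.mul_apply, Matrix.transpose_apply]
  exact Finset.sum_nonneg fun i _ => mul_self_nonneg _

lemma fro_transpose {m n : ℕ} (A : Matrix (Fin m) (Fin n) ℝ) : fro Aᵀ = fro A := by
  rw [fro, fro, Matrix.transpose_transpose, Matrix.trace_mul_comm]

lemma fro_proj_le {m n : ℕ} (P : Matrix (Fin m) (Fin m) ℝ)
    (hPT : Pᵀ = P) (hPP : P * P = P) (A : Matrix (Fin m) (Fin n) ℝ) :
    fro (P * A) ≤ fro A := by
  rw [fro, fro]
  apply Real.sqrt_le_sqrt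
  have h1 : (P * A)ᵀ * (P * A) = Aᵀ * (P * A) := by
    rw [Matrix.transpose_mul, hPT, Matrix.mul_assoc, ← Matrix.mul_assoc P, hPP]
  have h2 : ((1 - P) * A)ᵀ * ((1 - P) * A) = Aᵀ * ((1 - P) * A) := by
    have hQT : (1 - P)ᵀ = 1 - P := by rw [Matrix.transpose_sub, Matrix.transpose_one, hPT]
    have hQQ : (1 - P) * (1 - P) = 1 - P := by
      simp [Matrix.sub_mul, Matrix.mul_sub, hPP]
    rw [Matrix.transpose_mul, hQT, Matrix.mul_assoc, ← Matrix.mul_assoc (1 - P), hQQ]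
  have key : Matrix.trace (Aᵀ * A) =
      Matrix.trace ((P * A)ᵀ * (P * A)) + Matrix.trace (((1 - P) * A)ᵀ * ((1 - P) * A)) := by
    rw [h1, h2, ← Matrix.trace_add, ← Matrix.mul_add]
    congr 2
    simp [Matrix.sub_mul]
  have := trace_tmul_nonneg ((1 - P) * A)
  linarith

lemma fro_mul_orth_right {m n p : ℕ} (A : Matrix (Fin m) (Fin n) ℝ)
    (V : Matrix (Fin p) (Fin n) ℝ) (hV : Vᵀ * V = 1) :
    fro (A * Vᵀ) = fro A := by
  rw [fro, fro]
  congr 1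
  rw [Matrix.transpose_mul, Matrix.transpose_transpose]
  calc Matrix.trace (V * Aᵀ * (A * Vᵀ)) = Matrix.trace (V * (Aᵀ * A * Vᵀ)) := by
        rw [Matrix.mul_assoc, Matrix.mul_assoc]
    _ = Matrix.trace (Aᵀ * A * Vᵀ * V) := by rw [Matrix.trace_mul_comm]
    _ = Matrix.trace (Aᵀ * A) := by rw [Matrix.mul_assoc, hV, Matrix.mul_one]

theorem perp_projection_bound (m n p q : ℕ) (h L c thalf : ℝ)
    (hh : 0 < h) (hL : 0 ≤ L) (hc : 0 ≤ c)
    (Uh₁ : Matrix (Fin m) (Fin q) ℝ) (hUh₁ : Uh₁ᵀ * Uh₁ = 1)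
    (Vh₀ : Matrix (Fin n) (Fin p) ℝ) (hVh₀ : Vh₀ᵀ * Vh₀ = 1)
    (F : ℝ → Matrix (Fin m) (Fin n) ℝ → Matrix (Fin m) (Fin n) ℝ)
    (hLip : ∀ t (Z W : Matrix (Fin m) (Fin n) ℝ),
      fro (F t Z - F t W) ≤ L * fro (Z - W))
    (K₀ K₁ E : Matrix (Fin m) (Fin p) ℝ)
    (Yhalf : Matrix (Fin m) (Fin n) ℝ)
    (hK₀ : (1 - Uh₁ * Uh₁ᵀ) * K₀ = 0)
    (hK₁ : (1 - Uh₁ * Uh₁ᵀ) * K₁ = 0)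
    (hKstep : K₁ = K₀ + h • (F thalf Yhalf * Vh₀) + E)
    (hE : fro E ≤ c * h ^ 3) :
    ∀ Yhstar : Matrix (Fin m) (Fin n) ℝ,
      h * fro ((1 - Uh₁ * Uh₁ᵀ) * F thalf Yhstar * (Vh₀ * Vh₀ᵀ)) ≤
        h * L * fro (Yhstar - Yhalf) + c * h ^ 3 := by
  intro Yhstar
  set P : Matrix (Fin m) (Fin m) ℝ := 1 - Uh₁ * Uh₁ᵀ with hPdef
  have hPT : Pᵀ = P := by
    rw [hPdef, Matrix.transpose_sub, Matrix.transpose_one, Matrix.transpose_mul,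
      Matrix.transpose_transpose]
  have hPP : P * P = P := by
    rw [hPdef]
    simp only [Matrix.sub_mul, Matrix.mul_sub, Matrix.one_mul, Matrix.mul_one]
    rw [Matrix.mul_assoc, ← Matrix.mul_assoc Uh₁ᵀ, hUh₁, Matrix.one_mul]
    abel
  have hQT : (Vh₀ * Vh₀ᵀ)ᵀ = Vh₀ * Vh₀ᵀ := by
    rw [Matrix.transpose_mul, Matrix.transpose_transpose]
  have hQQ : (Vh₀ * Vh₀ᵀ) * (Vh₀ * Vh₀ᵀ) = Vh₀ * Vh₀ᵀ := by
    rw [Matrix.mul_assoc, ← Matrix.mul_assoc Vh₀ᵀ, hVh₀, Matrix.one_mul]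
  -- key identity : h • (P * (F thalf Yhalf * Vh₀)) = -(P * E)
  have key : h • (P * (F thalf Yhalf * Vh₀)) = -(P * E) := by
    have := hK₁
    rw [hKstep, Matrix.mul_add, Matrix.mul_add, hK₀, Matrix.mul_smul] at this
    rw [zero_add] at this
    linear_combination (norm := module) this
  -- decomposition
  have decomp : h • (P * F thalf Yhstar * (Vh₀ * Vh₀ᵀ)) =
      h • (P * (F thalf Yhstar - F thalf Yhalf) * (Vh₀ * Vh₀ᵀ)) + -(P * E) * Vh₀ᵀ := by
    have e1 : P * F thalf Yhstar * (Vh₀ * Vh₀ᵀ) =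
        P * (F thalf Yhstar - F thalf Yhalf) * (Vh₀ * Vh₀ᵀ)
          + (P * (F thalf Yhalf * Vh₀)) * Vh₀ᵀ := by
      simp only [Matrix.mul_sub, Matrix.sub_mul, Matrix.mul_assoc]
      abel
    rw [e1, smul_add]
    congr 1
    rw [← key, Matrix.smul_mul]
  have habs : |h| = h := abs_of_pos hh
  calc h * fro (P * F thalf Yhstar * (Vh₀ * Vh₀ᵀ))
      = fro (h • (P * F thalf Yhstar * (Vh₀ * Vh₀ᵀ))) := by rw [fro_smul, habs]
    _ = fro (h • (P * (F thalf Yhstar - F thalf Yhalf) * (Vh₀ * Vh₀ᵀ)) + -(P * E) * Vh₀ᵀ) := by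
        rw [decomp]
    _ ≤ fro (h • (P * (F thalf Yhstar - F thalf Yhalf) * (Vh₀ * Vh₀ᵀ)))
          + fro (-(P * E) * Vh₀ᵀ) := fro_add_le _ _
    _ ≤ h * L * fro (Yhstar - Yhalf) + c * h ^ 3 := by
        have b1 : fro (h • (P * (F thalf Yhstar - F thalf Yhalf) * (Vh₀ * Vh₀ᵀ)))
            ≤ h * (L * fro (Yhstar - Yhalf)) := by
          rw [fro_smul, habs]
          apply mul_le_mul_of_nonneg_left _ hh.le
          calc fro (P * (F thalf Yhstar - F thalf Yhalf) * (Vh₀ * Vh₀ᵀ))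
              = fro ((P * (F thalf Yhstar - F thalf Yhalf) * (Vh₀ * Vh₀ᵀ))ᵀ) :=
                (fro_transpose _).symm
            _ = fro ((Vh₀ * Vh₀ᵀ) * (P * (F thalf Yhstar - F thalf Yhalf))ᵀ) := by
                rw [Matrix.transpose_mul, hQT]
            _ ≤ fro ((P * (F thalf Yhstar - F thalf Yhalf))ᵀ) := fro_proj_le _ hQT hQQ _
            _ = fro (P * (F thalf Yhstar - F thalf Yhalf)) := fro_transpose _
            _ ≤ fro (F thalf Yhstar - F thalf Yhalf) := fro_proj_le _ hPT hPP _
            _ ≤ L * fro (Yhstar - Yhalf) := hLip _ _ _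
        have b2 : fro (-(P * E) * Vh₀ᵀ) ≤ c * h ^ 3 := by
          calc fro (-(P * E) * Vh₀ᵀ) = fro (-(P * E)) := fro_mul_orth_right _ _ hVh₀
            _ = fro ((-1 : ℝ) • (P * E)) := by rw [neg_one_smul]
            _ = fro (P * E) := by rw [fro_smul]; simp
            _ ≤ fro E := fro_proj_le _ hPT hPP _
            _ ≤ c * h ^ 3 := hE
        linarith [b1, b2]
end
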